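/- Upper bound on the tail: for real q ≥ 2 and integers 1 ≤ r ≤ n-1, the P_{n,q} probability that λ_1 < r satisfies P_{n,q}^r ≤ (1-1/q)^{-2} [ q^{-(2n-2r+2)} + q^{-(n+1)} / (1 - q^{-(2n+1)}) ]. -/

import Mathlib

open Finset

noncomputable section

/-- The q-Pochhammer-type product `(1/q)_m = ∏_{k=1}^m (1 - 1/q^k)`. -/
def qPoch (q : ℝ) (m : ℕ) : ℝ := ∏ k ∈ Finset.Icc 1 m, (1 - 1/q^k)

/-- `conjPart l j = λ'_j`, the `j`-th part of the conjugate partition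
(the number of parts of `l` that are at least `j`). -/
def conjPart {n : ℕ} (l : n.Partition) (j : ℕ) : ℕ :=
  Multiset.countP (fun p => j ≤ p) l.parts

/-- `rowLen l i = λ_i`, the `i`-th largest part of `l` (1-indexed, `0` if `i` exceeds
the number of parts). -/
def rowLen {n : ℕ} (l : n.Partition) (i : ℕ) : ℕ :=
  ((Finset.Icc 1 n).filter (fun j => i ≤ conjPart l j)).card

/-- The Young diagram of `l`, as the set of cells `(i,j)` (row `i`, column `j`,
both 1-indexed) with `1 ≤ j ≤ λ_i`. -/
def cells {n : ℕ} (l : n.Partition) : Finset (ℕ × ℕ) :=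
  (Finset.Icc 1 n ×ˢ Finset.Icc 1 n).filter (fun s => s.2 ≤ rowLen l s.1)

/-- The arm length `a(s) = λ_i - j` of the cell `s = (i,j)`. -/
def arm {n : ℕ} (l : n.Partition) (s : ℕ × ℕ) : ℕ := rowLen l s.1 - s.2

/-- The leg length `l(s) = λ'_j - i` of the cell `s = (i,j)`. -/
def leg {n : ℕ} (l : n.Partition) (s : ℕ × ℕ) : ℕ := conjPart l s.2 - s.1

/-- The hook length `h(s) = a(s) + l(s) + 1` of the cell `s`. -/
def hookLen {n : ℕ} (l : n.Partition) (s : ℕ × ℕ) : ℕ := arm l s + leg l s + 1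

/-- `n(λ) = ∑_i (i-1) λ_i`. -/
def nStat {n : ℕ} (l : n.Partition) : ℕ := ∑ i ∈ Finset.Icc 1 n, (i - 1) * rowLen l i

/-- The multiplicity `m_j(λ)` of `j` as a part of `l`. -/
def mult {n : ℕ} (l : n.Partition) (j : ℕ) : ℕ := Multiset.count j l.parts

/-- The denominator `∏_j q^{(λ'_j)^2} (1/q)_{m_j(λ)}` appearing in the measure `P_{n,q}`. -/
def Pden (q : ℝ) {n : ℕ} (l : n.Partition) : ℝ :=
  ∏ j ∈ Finset.Icc 1 n, q ^ ((conjPart l j)^2) * qPoch q (mult l j)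

/-- The measure `P_{n,q}(λ) = q^n (1/q)_n / ∏_j q^{(λ'_j)^2} (1/q)_{m_j(λ)}`. -/
def Pmeas (q : ℝ) {n : ℕ} (l : n.Partition) : ℝ := q^n * qPoch q n / Pden q l

/-- `z(n,q)`: the coefficient of `u^n` in the formal expansion of
`∏_{i≥1} ∏_{j≥0} 1/(1 - u/q^{i+j})`, obtained by expanding each factor
as a geometric series and collecting terms of total degree `n`. -/
def zCoeff (n : ℕ) (q : ℝ) : ℝ :=
  ∑' f : {f : (ℕ × ℕ) →₀ ℕ // (f.sum fun _ k => k) = n},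
    ∏ p ∈ (f : (ℕ × ℕ) →₀ ℕ).support,
      ((1 : ℝ) / q ^ ((p.1 + 1) + p.2)) ^ ((f : (ℕ × ℕ) →₀ ℕ) p)

/-- The measure `Q_{n,q}(λ) = (1/z(n,q)) / (q^{|λ|+2n(λ)} ∏_{s∈λ} (1-1/q^{h(s)})^2)`. -/
def Qmeas (q : ℝ) {n : ℕ} (l : n.Partition) : ℝ :=
  (1 / zCoeff n q) *
    (1 / (q ^ (n + 2 * nStat l) * ∏ s ∈ cells l, (1 - 1/q^(hookLen l s))^2))

/-- `P_{n,q}^r`: the `P_{n,q}`-probability that the largest part of `λ` is `< r`. -/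
def Ptail (n : ℕ) (q : ℝ) (r : ℕ) : ℝ :=
  ∑ l ∈ Finset.univ.filter (fun l : n.Partition => ∀ p ∈ l.parts, p < r), Pmeas q l

end
noncomputable section Aux
open Finset

variable {q : ℝ}

lemma qPoch_factor_pos (hq : 2 ≤ q) {k : ℕ} (hk : 1 ≤ k) : 0 < 1 - 1/q^k := by
  have h1 : (1:ℝ) < q := by linarith
  have h2 : (1:ℝ) < q ^ k := one_lt_pow₀ h1 (by omega)
  have : 1/q^k < 1 := by rw [div_lt_one (by linarith)]; exact h2
  linarith

lemma qPoch_factor_le_one (hq : 2 ≤ q) (k : ℕ) : 1 - 1/q^k ≤ 1 := by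
  have h1 : (0:ℝ) < q := by linarith
  have : 0 ≤ 1/q^k := by positivity
  linarith

lemma qPoch_pos (hq : 2 ≤ q) (m : ℕ) : 0 < qPoch q m := by
  apply Finset.prod_pos
  intro k hk
  exact qPoch_factor_pos hq (Finset.mem_Icc.mp hk).1

lemma qPoch_le_one (hq : 2 ≤ q) (m : ℕ) : qPoch q m ≤ 1 := by
  apply Finset.prod_le_one
  · intro k hk; exact (qPoch_factor_pos hq (Finset.mem_Icc.mp hk).1).le
  · intro k _; exact qPoch_factor_le_one hq k

lemma qPoch_succ (q : ℝ) (m : ℕ) : qPoch q (m+1) = qPoch q m * (1 - 1/q^(m+1)) := by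
  unfold qPoch
  rw [Finset.prod_Icc_succ_top (by omega)]

lemma qPoch_anti (hq : 2 ≤ q) {m k : ℕ} (h : m ≤ k) : qPoch q k ≤ qPoch q m := by
  induction k, h using Nat.le_induction with
  | base => exact le_refl _
  | succ k hmk ih =>
    rw [qPoch_succ]
    calc qPoch q k * (1 - 1/q^(k+1)) ≤ qPoch q k * 1 := by
          apply mul_le_mul_of_nonneg_left (qPoch_factor_le_one hq _) (qPoch_pos hq k).le
      _ = qPoch q k := mul_one _
      _ ≤ qPoch q m := ih

end Aux
section Aux2
open Finset

lemma msup_mem {s : Multiset ℕ} (h : s ≠ 0) : s.sup ∈ s := by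
  induction s using Multiset.induction_on with
  | empty => exact absurd rfl h
  | cons a t ih =>
    rw [Multiset.sup_cons]
    rcases eq_or_ne t 0 with rfl | ht
    · simp
    · rcases le_total a t.sup with h1 | h1
      · rw [sup_eq_right.mpr h1]
        exact Multiset.mem_cons_of_mem (ih ht)
      · rw [sup_eq_left.mpr h1]
        exact Multiset.mem_cons_self a t

lemma sum_indicator_le {N p : ℕ} (hp : p ≤ N) :
    ∑ j ∈ Finset.Icc 1 N, (if j ≤ p then 1 else 0 : ℕ) = p := by
  rw [Finset.sum_ite, Finset.sum_const, Finset.sum_const]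
  have : (Finset.Icc 1 N).filter (fun j => j ≤ p) = Finset.Icc 1 p := by
    ext j; simp only [Finset.mem_filter, Finset.mem_Icc]; omega
  simp [this]

lemma sum_countP_eq_sum {N : ℕ} (s : Multiset ℕ) (h : ∀ p ∈ s, p ≤ N) :
    ∑ j ∈ Finset.Icc 1 N, Multiset.countP (fun x => j ≤ x) s = s.sum := by
  induction s using Multiset.induction_on with
  | empty => simp
  | cons a t ih =>
    simp only [Multiset.countP_cons, Multiset.sum_cons, Finset.sum_add_distrib]
    rw [ih (fun p hp => h p (Multiset.mem_cons_of_mem hp)),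
      sum_indicator_le (h a (Multiset.mem_cons_self a t))]
    ring

-- conjPart values
lemma conjPart_eq_countP {n : ℕ} (l : n.Partition) (j : ℕ) :
    conjPart l j = Multiset.countP (fun p => j ≤ p) l.parts := rfl

lemma part_le_n {n : ℕ} (l : n.Partition) {p : ℕ} (hp : p ∈ l.parts) : p ≤ n := by
  have := Multiset.single_le_sum (fun x _ => Nat.zero_le x) p hp
  rwa [l.parts_sum] at this

lemma conjPart_eq_zero {n : ℕ} (l : n.Partition) {N j : ℕ} (h : ∀ p ∈ l.parts, p ≤ N)
    (hj : N < j) : conjPart l j = 0 := by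
  rw [conjPart_eq_countP, Multiset.countP_eq_zero]
  intro p hp
  have := h p hp
  omega

lemma sum_conjPart {n N : ℕ} (l : n.Partition) (h : ∀ p ∈ l.parts, p ≤ N) :
    ∑ j ∈ Finset.Icc 1 N, conjPart l j = n := by
  simp only [conjPart_eq_countP]
  rw [sum_countP_eq_sum l.parts h, l.parts_sum]

end Aux2
noncomputable section Aux3
open Finset

variable {q : ℝ}

/-- Remove one copy of the part `a` from a partition of `m`. -/
def removePart {m : ℕ} (l : m.Partition) (a : ℕ) (ha : a ∈ l.parts) : (m - a).Partition where
  parts := l.parts.erase a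
  parts_pos := fun hi => l.parts_pos (Multiset.mem_of_mem_erase hi)
  parts_sum := by
    have h1 : a ::ₘ l.parts.erase a = l.parts := Multiset.cons_erase ha
    have h2 := l.parts_sum
    rw [← h1, Multiset.sum_cons] at h2
    omega

variable {m : ℕ} {l : m.Partition} {a : ℕ}

lemma conjPart_removePart (ha : a ∈ l.parts) (j : ℕ) :
    conjPart l j = conjPart (removePart l a ha) j + (if j ≤ a then 1 else 0) := by
  have h1 : a ::ₘ l.parts.erase a = l.parts := Multiset.cons_erase ha
  rw [conjPart_eq_countP, conjPart_eq_countP, ← h1, Multiset.countP_cons]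
  rfl

lemma mult_removePart (ha : a ∈ l.parts) (j : ℕ) :
    mult l j = mult (removePart l a ha) j + (if j = a then 1 else 0) := by
  have h1 : a ::ₘ l.parts.erase a = l.parts := Multiset.cons_erase ha
  have h2 := congrArg (Multiset.count j) h1
  rw [Multiset.count_cons] at h2
  unfold mult removePart
  exact h2.symm

lemma removePart_parts_le (ha : a ∈ l.parts) (hmax : ∀ p ∈ l.parts, p ≤ a) :
    ∀ p ∈ (removePart l a ha).parts, p ≤ a :=
  fun p hp => hmax p (Multiset.mem_of_mem_erase hp)

lemma a_pos (ha : a ∈ l.parts) : 1 ≤ a := l.parts_pos ha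

lemma a_le_m (ha : a ∈ l.parts) : a ≤ m := part_le_n l ha

lemma sum_sq_conj_removePart (ha : a ∈ l.parts) (hmax : ∀ p ∈ l.parts, p ≤ a) :
    ∑ j ∈ Finset.Icc 1 m, (conjPart l j)^2
      = (∑ j ∈ Finset.Icc 1 (m-a), (conjPart (removePart l a ha) j)^2) + (2*(m-a) + a) := by
  set ρ := removePart l a ha with hρ
  have hpt : ∀ j, (conjPart l j)^2
      = (conjPart ρ j)^2 + (if j ≤ a then 2 * conjPart ρ j + 1 else 0) := by
    intro j
    rw [conjPart_removePart ha j]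
    by_cases h : j ≤ a <;> simp [h] <;> ring
  calc ∑ j ∈ Finset.Icc 1 m, (conjPart l j)^2
      = ∑ j ∈ Finset.Icc 1 m, ((conjPart ρ j)^2 + (if j ≤ a then 2 * conjPart ρ j + 1 else 0)) := by
        exact Finset.sum_congr rfl (fun j _ => hpt j)
    _ = (∑ j ∈ Finset.Icc 1 m, (conjPart ρ j)^2)
        + ∑ j ∈ Finset.Icc 1 m, (if j ≤ a then 2 * conjPart ρ j + 1 else 0) := by
        rw [Finset.sum_add_distrib]
    _ = (∑ j ∈ Finset.Icc 1 (m-a), (conjPart ρ j)^2) + (2*(m-a) + a) := by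
        congr 1
        · -- restrict the sum: conjPart ρ j = 0 for j > m - a
          symm
          apply Finset.sum_subset (Finset.Icc_subset_Icc_right (by omega))
          intro j hj hj2
          have hj' : m - a < j := by
            simp only [Finset.mem_Icc] at hj hj2; omega
          have : conjPart ρ j = 0 :=
            conjPart_eq_zero ρ (fun p hp => part_le_n ρ hp) hj'
          simp [this]
        · -- the indicator sum
          rw [Finset.sum_ite, Finset.sum_const_zero, add_zero]
          have hfil : (Finset.Icc 1 m).filter (fun j => j ≤ a) = Finset.Icc 1 a := by
            ext j
            simp only [Finset.mem_filter, Finset.mem_Icc]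
            have := a_le_m ha
            omega
          rw [hfil, Finset.sum_add_distrib, ← Finset.mul_sum,
            sum_conjPart ρ (removePart_parts_le ha hmax)]
          have : ρ.parts.sum = m - a := ρ.parts_sum
          simp [Nat.card_Icc]

lemma prod_poch_removePart (hq : 2 ≤ q) (ha : a ∈ l.parts) :
    ∏ j ∈ Finset.Icc 1 m, qPoch q (mult l j)
      = (∏ j ∈ Finset.Icc 1 (m-a), qPoch q (mult (removePart l a ha) j))
        * (1 - 1/q^(mult (removePart l a ha) a + 1)) := by
  set ρ := removePart l a ha with hρ
  have hmem : a ∈ Finset.Icc 1 m := Finset.mem_Icc.mpr ⟨a_pos ha, a_le_m ha⟩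
  have step1 : ∏ j ∈ Finset.Icc 1 m, qPoch q (mult l j)
      = (∏ j ∈ Finset.Icc 1 m, qPoch q (mult ρ j)) * (1 - 1/q^(mult ρ a + 1)) := by
    have hpt : ∀ j, qPoch q (mult l j)
        = qPoch q (mult ρ j) * (if j = a then (1 - 1/q^(mult ρ a + 1)) else 1) := by
      intro j
      rw [mult_removePart ha j]
      by_cases h : j = a
      · subst h; simp only [if_pos rfl, if_true]; rw [qPoch_succ]
      · simp [h, hρ]
    rw [Finset.prod_congr rfl (fun j _ => hpt j), Finset.prod_mul_distrib,
      Finset.prod_ite_eq' (Finset.Icc 1 m) a (fun _ => (1 - 1/q^(mult ρ a + 1))), if_pos hmem]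
  have step2 : ∏ j ∈ Finset.Icc 1 m, qPoch q (mult ρ j)
      = ∏ j ∈ Finset.Icc 1 (m-a), qPoch q (mult ρ j) := by
    symm
    apply Finset.prod_subset (Finset.Icc_subset_Icc_right (by omega))
    intro j hj hj2
    have hj' : m - a < j := by
      simp only [Finset.mem_Icc] at hj hj2; omega
    have h0 : mult ρ j = 0 := by
      unfold mult
      rw [Multiset.count_eq_zero]
      intro hmem'
      have := part_le_n ρ hmem'
      omega
    rw [h0]
    unfold qPoch
    simp
  rw [step1, step2]

lemma Pden_removePart (hq : 2 ≤ q) (ha : a ∈ l.parts) (hmax : ∀ p ∈ l.parts, p ≤ a) :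
    Pden q l = Pden q (removePart l a ha)
      * (q^(2*(m-a) + a) * (1 - 1/q^(mult (removePart l a ha) a + 1))) := by
  set ρ := removePart l a ha with hρ
  unfold Pden
  rw [Finset.prod_mul_distrib, Finset.prod_mul_distrib,
    Finset.prod_pow_eq_pow_sum, Finset.prod_pow_eq_pow_sum,
    sum_sq_conj_removePart ha hmax, pow_add,
    prod_poch_removePart hq ha]
  ring

end Aux3
noncomputable section Aux4
open Finset

variable {q : ℝ}

/-- normalized weight -/
def Vq (q : ℝ) {m : ℕ} (l : m.Partition) : ℝ := q^m / Pden q l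

/-- total weight of all partitions of `m` -/
def Tq (q : ℝ) (m : ℕ) : ℝ := ∑ l : m.Partition, Vq q l

lemma Pden_pos (hq : 2 ≤ q) {m : ℕ} (l : m.Partition) : 0 < Pden q l := by
  apply Finset.prod_pos
  intro j _
  have h0 : (0:ℝ) < q := by linarith
  exact mul_pos (by positivity) (qPoch_pos hq _)

lemma Vq_pos (hq : 2 ≤ q) {m : ℕ} (l : m.Partition) : 0 < Vq q l := by
  have h0 : (0:ℝ) < q := by linarith
  exact div_pos (by positivity) (Pden_pos hq l)

lemma Tq_nonneg (hq : 2 ≤ q) (m : ℕ) : 0 ≤ Tq q m :=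
  Finset.sum_nonneg (fun l _ => (Vq_pos hq l).le)

lemma one_sub_inv_q_pos (hq : 2 ≤ q) : 0 < 1 - 1/q := by
  have : 1/q ≤ 1/2 := by
    apply one_div_le_one_div_of_le <;> linarith
  linarith

lemma Vq_removePart_le (hq : 2 ≤ q) {m : ℕ} {l : m.Partition} {a : ℕ}
    (ha : a ∈ l.parts) (hmax : ∀ p ∈ l.parts, p ≤ a) :
    Vq q l ≤ (1 - 1/q)⁻¹ * ((1/q)^(2*(m-a)) * Vq q (removePart l a ha)) := by
  set ρ := removePart l a ha with hρ
  set c := mult ρ a with hc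
  have h0 : (0:ℝ) < q := by linarith
  have hP : 0 < Pden q ρ := Pden_pos hq ρ
  set s : ℝ := 1/q^(c+1) with hsdef
  have hs : 0 < 1 - s := qPoch_factor_pos hq (by omega)
  have hs2 : 1 - 1/q ≤ 1 - s := by
    have : s ≤ 1/q := by
      rw [hsdef]
      apply one_div_le_one_div_of_le h0
      calc q = q^1 := (pow_one q).symm
        _ ≤ q^(c+1) := pow_le_pow_right₀ (by linarith) (by omega)
    linarith
  have h1q : 0 < 1 - 1/q := one_sub_inv_q_pos hq
  have hm : q^m = q^(m-a) * q^a := by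
    rw [← pow_add]
    congr 1
    have := a_le_m ha
    omega
  have h2 : q^(2*(m-a)+a) = q^(2*(m-a)) * q^a := pow_add q _ _
  have hqa : (q:ℝ)^a ≠ 0 := by positivity
  have hqe : (q:ℝ)^(2*(m-a)) ≠ 0 := by positivity
  have key : Vq q l = Vq q ρ * ((q^(2*(m-a)))⁻¹ * (1 - s)⁻¹) := by
    unfold Vq
    rw [Pden_removePart hq ha hmax, ← hρ, ← hc, ← hsdef, hm, h2]
    rw [show Pden q ρ * (q^(2*(m-a)) * q^a * (1 - s))
        = (Pden q ρ * ((1 - s) * q^(2*(m-a)))) * q^a by ring]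
    rw [mul_div_mul_right _ _ hqa, ← div_div, div_eq_mul_inv, mul_inv]
    ring
  rw [key]
  have hrw : ((1:ℝ)/q)^(2*(m-a)) = (q^(2*(m-a)))⁻¹ := by
    rw [one_div, inv_pow]
  rw [hrw]
  have hVρ : 0 ≤ Vq q ρ := (Vq_pos hq ρ).le
  have hinv : (1 - s)⁻¹ ≤ (1 - 1/q)⁻¹ := inv_anti₀ h1q hs2
  calc Vq q ρ * ((q^(2*(m-a)))⁻¹ * (1 - s)⁻¹)
      ≤ Vq q ρ * ((q^(2*(m-a)))⁻¹ * (1 - 1/q)⁻¹) := by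
        apply mul_le_mul_of_nonneg_left _ hVρ
        apply mul_le_mul_of_nonneg_left hinv (by positivity)
    _ = (1 - 1/q)⁻¹ * ((q^(2*(m-a)))⁻¹ * Vq q ρ) := by ring

/-- total version of removePart (junk value if `a` is not a part) -/
def eraseOne (a : ℕ) {m : ℕ} (l : m.Partition) : (m - a).Partition :=
  if h : a ∈ l.parts then removePart l a h else default

lemma main_bound (hq : 2 ≤ q) {m : ℕ} (hm : 1 ≤ m) (k : ℕ) :
    ∑ l ∈ Finset.univ.filter (fun l : m.Partition => ∀ p ∈ l.parts, p ≤ k), Vq q l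
      ≤ (1 - 1/q)⁻¹ * ∑ a ∈ Finset.Icc 1 (min k m), ((1/q)^(2*(m-a)) * Tq q (m-a)) := by
  have h1q : 0 < 1 - 1/q := one_sub_inv_q_pos hq
  have hne : ∀ l : m.Partition, l.parts ≠ 0 := by
    intro l hl
    have := l.parts_sum
    rw [hl] at this
    simp at this
    omega
  have hmaps : ∀ l ∈ Finset.univ.filter (fun l : m.Partition => ∀ p ∈ l.parts, p ≤ k),
      l.parts.sup ∈ Finset.Icc 1 (min k m) := by
    intro l hl
    rw [Finset.mem_filter] at hl
    have hsm : l.parts.sup ∈ l.parts := msup_mem (hne l)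
    rw [Finset.mem_Icc]
    refine ⟨l.parts_pos hsm, le_min (hl.2 _ hsm) (part_le_n l hsm)⟩
  rw [← Finset.sum_fiberwise_of_maps_to hmaps (Vq q), Finset.mul_sum]
  apply Finset.sum_le_sum
  intro a _
  set F := (Finset.univ.filter (fun l : m.Partition => ∀ p ∈ l.parts, p ≤ k)).filter
      (fun l => l.parts.sup = a) with hF
  have hmem : ∀ l ∈ F, a ∈ l.parts ∧ ∀ p ∈ l.parts, p ≤ a := by
    intro l hl
    rw [hF, Finset.mem_filter] at hl
    constructor
    · rw [← hl.2]; exact msup_mem (hne l)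
    · intro p hp; rw [← hl.2]; exact Multiset.le_sup hp
  calc ∑ l ∈ F, Vq q l
      ≤ ∑ l ∈ F, (1 - 1/q)⁻¹ * ((1/q)^(2*(m-a)) * Vq q (eraseOne a l)) := by
        apply Finset.sum_le_sum
        intro l hl
        obtain ⟨ha, hmax⟩ := hmem l hl
        have : eraseOne a l = removePart l a ha := dif_pos ha
        rw [this]
        exact Vq_removePart_le hq ha hmax
    _ = (1 - 1/q)⁻¹ * ((1/q)^(2*(m-a)) * ∑ l ∈ F, Vq q (eraseOne a l)) := by
        rw [← Finset.mul_sum, ← Finset.mul_sum]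
    _ ≤ (1 - 1/q)⁻¹ * ((1/q)^(2*(m-a)) * Tq q (m-a)) := by
        apply mul_le_mul_of_nonneg_left _ (by positivity)
        apply mul_le_mul_of_nonneg_left _ (by positivity)
        -- injectivity + subset
        have hinj : ∀ x ∈ F, ∀ y ∈ F, eraseOne a x = eraseOne a y → x = y := by
          intro x hx y hy hxy
          obtain ⟨hax, _⟩ := hmem x hx
          obtain ⟨hay, _⟩ := hmem y hy
          rw [show eraseOne a x = removePart x a hax from dif_pos hax,
            show eraseOne a y = removePart y a hay from dif_pos hay] at hxy
          have hparts : x.parts.erase a = y.parts.erase a :=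
            congrArg Nat.Partition.parts hxy
          have : x.parts = y.parts := by
            rw [← Multiset.cons_erase hax, ← Multiset.cons_erase hay, hparts]
          exact Nat.Partition.ext this
        rw [← Finset.sum_image hinj]
        unfold Tq
        apply Finset.sum_le_sum_of_subset_of_nonneg (Finset.subset_univ _)
        intro ρ _ _
        exact (Vq_pos hq ρ).le

end Aux4
noncomputable section Aux5
open Finset

variable {q : ℝ}

lemma geom_aux {x : ℝ} (hx0 : 0 ≤ x) (hx1 : x < 1) (N : ℕ) :
    ∑ a ∈ Finset.Icc 1 N, x^(N-a) ≤ (1-x)⁻¹ := by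
  have hpos : 0 < 1 - x := by linarith
  induction N with
  | zero => simp [inv_nonneg.mpr hpos.le]
  | succ N ih =>
    rw [Finset.sum_Icc_succ_top (by omega)]
    have h1 : ∑ a ∈ Finset.Icc 1 N, x^(N+1-a) = x * ∑ a ∈ Finset.Icc 1 N, x^(N-a) := by
      rw [Finset.mul_sum]
      apply Finset.sum_congr rfl
      intro a hha
      have ha : a ≤ N := (Finset.mem_Icc.mp hha).2
      rw [show N+1-a = (N-a)+1 by omega, pow_succ]
      ring
    rw [h1]
    have h2 : x * ∑ a ∈ Finset.Icc 1 N, x^(N-a) ≤ x * (1-x)⁻¹ :=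
      mul_le_mul_of_nonneg_left ih hx0
    have h3 : x * (1-x)⁻¹ + 1 ≤ (1-x)⁻¹ + 0 := by
      have hinv : (1-x) * (1-x)⁻¹ = 1 := mul_inv_cancel₀ hpos.ne'
      nlinarith [inv_nonneg.mpr hpos.le]
    rw [show N+1-(N+1) = 0 by omega, pow_zero]
    linarith

lemma u_facts (hq : 2 ≤ q) : 0 < 1/q ∧ 1/q ≤ 1/2 := by
  constructor
  · positivity
  · apply one_div_le_one_div_of_le <;> linarith

lemma Tq_zero (hq : 2 ≤ q) : Tq q 0 = 1 := by
  unfold Tq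
  rw [Finset.univ_unique, Finset.sum_singleton]
  unfold Vq Pden
  rw [show Finset.Icc 1 0 = (∅ : Finset ℕ) from Finset.Icc_eq_empty (by omega)]
  rw [Finset.prod_empty, pow_zero, div_one]

lemma filter_all_le {m : ℕ} :
    (Finset.univ.filter (fun l : m.Partition => ∀ p ∈ l.parts, p ≤ m)) = Finset.univ := by
  apply Finset.filter_true_of_mem
  intro l _
  exact fun p hp => part_le_n l hp

lemma Tq_one (hq : 2 ≤ q) : Tq q 1 ≤ (1 - 1/q)⁻¹ := by
  have h := main_bound hq (le_refl 1) 1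
  rw [filter_all_le] at h
  simp only [min_self] at h
  unfold Tq
  calc ∑ l : Nat.Partition 1, Vq q l
      ≤ (1 - 1/q)⁻¹ * ∑ a ∈ Finset.Icc 1 1, ((1/q)^(2*(1-a)) * Tq q (1-a)) := h
    _ = (1 - 1/q)⁻¹ := by
        rw [Finset.Icc_self, Finset.sum_singleton]
        simp [Tq_zero hq]

/-- The fixed-point constant `B` (as a function of `u = 1/q`). -/
def Bfun (u : ℝ) : ℝ :=
  ((1 - u + u^2)/(1 - u)^2) / (1 - u^4/((1 - u)*(1 - u^2)))

lemma Bfun_facts {u : ℝ} (hu0 : 0 < u) (hu2 : u ≤ 1/2) :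
    (1 - u)⁻¹ ≤ Bfun u ∧ 0 < Bfun u ∧ (1:ℝ) ≤ Bfun u ∧
    (1 - u)⁻¹ * (Bfun u * (u^4 * (1 - u^2)⁻¹) + u^2 * (1 - u)⁻¹ + 1) ≤ Bfun u := by
  have h1 : 0 < 1 - u := by linarith
  have h2 : 0 < 1 - u^2 := by nlinarith
  have hY : u^4/((1 - u)*(1 - u^2)) < 1 := by
    rw [div_lt_one (by positivity)]
    nlinarith
  have hYnn : 0 ≤ u^4/((1 - u)*(1 - u^2)) := by positivity
  have hX : 0 < (1 - u + u^2)/(1 - u)^2 := by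
    apply div_pos (by nlinarith) (by positivity)
  have hB : 0 < Bfun u := div_pos hX (by linarith)
  have hXB : (1 - u + u^2)/(1 - u)^2 = Bfun u * (1 - u^4/((1 - u)*(1 - u^2))) := by
    unfold Bfun
    rw [div_mul_cancel₀]
    linarith
  have hXge : (1 - u)⁻¹ ≤ (1 - u + u^2)/(1 - u)^2 := by
    rw [inv_eq_one_div, div_le_div_iff₀ h1 (by positivity)]
    nlinarith
  have hBge : (1 - u)⁻¹ ≤ Bfun u := by
    calc (1 - u)⁻¹ ≤ (1 - u + u^2)/(1 - u)^2 := hXge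
      _ ≤ Bfun u := by nlinarith [mul_nonneg hB.le hYnn]
  have hone : (1:ℝ) ≤ Bfun u := by
    have : (1:ℝ) ≤ (1 - u)⁻¹ := by
      rw [one_le_inv_iff₀]
      constructor <;> linarith
    linarith
  refine ⟨hBge, hB, hone, ?_⟩
  have hkey : (1 - u)⁻¹ * (Bfun u * (u^4 * (1 - u^2)⁻¹) + u^2 * (1 - u)⁻¹ + 1)
      = Bfun u * (u^4/((1 - u)*(1 - u^2))) + (1 - u + u^2)/(1 - u)^2 := by
    field_simp
    ring
  rw [hkey, hXB]
  ring_nf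
  exact le_rfl

lemma Tq_le_B (hq : 2 ≤ q) (m : ℕ) : Tq q m ≤ Bfun (1/q) := by
  obtain ⟨hu0, hu2⟩ := u_facts hq
  obtain ⟨hBge, hBpos, hBone, hfix⟩ := Bfun_facts hu0 hu2
  have h1 : 0 < 1 - 1/q := by linarith
  have h1sq : 0 < 1 - (1/q)^2 := by nlinarith
  induction m using Nat.strong_induction_on with
  | _ m ih =>
    match m with
    | 0 =>
      rw [Tq_zero hq]; exact hBone
    | 1 => exact le_trans (Tq_one hq) hBge
    | (M+2) =>
      have h := main_bound hq (show 1 ≤ M+2 by omega) (M+2)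
      rw [filter_all_le, min_self] at h
      have hTm : Tq q (M+2)
          ≤ (1 - 1/q)⁻¹ * ∑ a ∈ Finset.Icc 1 (M+2), ((1/q)^(2*(M+2-a)) * Tq q (M+2-a)) := h
      have hsplit : ∑ a ∈ Finset.Icc 1 (M+2), ((1/q)^(2*(M+2-a)) * Tq q (M+2-a))
          = (∑ a ∈ Finset.Icc 1 M, ((1/q)^(2*(M+2-a)) * Tq q (M+2-a)))
            + (1/q)^2 * Tq q 1 + Tq q 0 := by
        rw [Finset.sum_Icc_succ_top (by omega), Finset.sum_Icc_succ_top (by omega)]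
        have e1 : M + 2 - (M+1) = 1 := by omega
        have e2 : M + 2 - (M+2) = 0 := by omega
        rw [e1, e2]
        norm_num
      have hgeom : ∑ a ∈ Finset.Icc 1 M, ((1/q)^(2*(M+2-a)) * Tq q (M+2-a))
          ≤ Bfun (1/q) * ((1/q)^4 * (1 - (1/q)^2)⁻¹) := by
        have hterm : ∀ a ∈ Finset.Icc 1 M, (1/q)^(2*(M+2-a)) * Tq q (M+2-a)
            ≤ Bfun (1/q) * (1/q)^4 * ((1/q)^2)^(M-a) := by
          intro a hha
          have haM : 1 ≤ a ∧ a ≤ M := Finset.mem_Icc.mp hha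
          have hlt : M+2-a < M+2 := by omega
          have hexp : 2*(M+2-a) = 4 + 2*(M-a) := by omega
          have hT := ih (M+2-a) hlt
          calc (1/q)^(2*(M+2-a)) * Tq q (M+2-a)
              ≤ (1/q)^(2*(M+2-a)) * Bfun (1/q) := by
                apply mul_le_mul_of_nonneg_left hT (by positivity)
            _ = Bfun (1/q) * (1/q)^4 * ((1/q)^2)^(M-a) := by
                rw [hexp, pow_add, ← pow_mul]
                ring
        calc ∑ a ∈ Finset.Icc 1 M, ((1/q)^(2*(M+2-a)) * Tq q (M+2-a))
            ≤ ∑ a ∈ Finset.Icc 1 M, Bfun (1/q) * (1/q)^4 * ((1/q)^2)^(M-a) :=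
              Finset.sum_le_sum hterm
          _ = Bfun (1/q) * (1/q)^4 * ∑ a ∈ Finset.Icc 1 M, ((1/q)^2)^(M-a) := by
              rw [Finset.mul_sum]
          _ ≤ Bfun (1/q) * (1/q)^4 * (1 - (1/q)^2)⁻¹ := by
              apply mul_le_mul_of_nonneg_left
                (geom_aux (by positivity) (by nlinarith) M)
                (mul_nonneg hBpos.le (by positivity))
          _ = Bfun (1/q) * ((1/q)^4 * (1 - (1/q)^2)⁻¹) := by ring
      have hT1 : (1/q)^2 * Tq q 1 ≤ (1/q)^2 * (1 - 1/q)⁻¹ :=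
        mul_le_mul_of_nonneg_left (Tq_one hq) (by positivity)
      have hT0 : Tq q 0 = 1 := Tq_zero hq
      have hsum : ∑ a ∈ Finset.Icc 1 (M+2), ((1/q)^(2*(M+2-a)) * Tq q (M+2-a))
          ≤ Bfun (1/q) * ((1/q)^4 * (1 - (1/q)^2)⁻¹) + (1/q)^2 * (1 - 1/q)⁻¹ + 1 := by
        rw [hsplit, hT0]
        linarith
      calc Tq q (M+2)
          ≤ (1 - 1/q)⁻¹ * ∑ a ∈ Finset.Icc 1 (M+2), ((1/q)^(2*(M+2-a)) * Tq q (M+2-a)) := hTm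
        _ ≤ (1 - 1/q)⁻¹ * (Bfun (1/q) * ((1/q)^4 * (1 - (1/q)^2)⁻¹)
            + (1/q)^2 * (1 - 1/q)⁻¹ + 1) := by
            apply mul_le_mul_of_nonneg_left hsum (by positivity)
        _ ≤ Bfun (1/q) := hfix

end Aux5
noncomputable section Final
open Finset

lemma qPoch_three (q : ℝ) : qPoch q 3 = (1 - 1/q) * (1 - 1/q^2) * (1 - 1/q^3) := by
  have h0 : qPoch q 0 = 1 := by
    unfold qPoch
    rw [show Finset.Icc 1 0 = (∅ : Finset ℕ) from Finset.Icc_eq_empty (by omega),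
      Finset.prod_empty]
  rw [show (3:ℕ) = 2+1 from rfl, qPoch_succ, show (2:ℕ) = 1+1 from rfl, qPoch_succ,
    show (1:ℕ) = 0+1 from rfl, qPoch_succ, h0]
  norm_num

lemma coeff_le {u : ℝ} (hu0 : 0 < u) (hu2 : u ≤ 1/2) :
    ((1 - u) * (1 - u^2) * (1 - u^3)) * ((1 - u)⁻¹ * (Bfun u * (1 - u^2)⁻¹))
      ≤ (1 - u)⁻¹^2 := by
  have h1 : 0 < 1 - u := by linarith
  have h2 : 0 < 1 - u^2 := by nlinarith
  have h3 : 0 < 1 - u^3 := by nlinarith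
  have hY : 0 < 1 - u^4/((1 - u)*(1 - u^2)) := by
    rw [sub_pos, div_lt_one (by positivity)]
    nlinarith
  have hXpos : 0 < 1 - u + u^2 := by nlinarith
  have hlhs : ((1 - u) * (1 - u^2) * (1 - u^3)) * ((1 - u)⁻¹ * (Bfun u * (1 - u^2)⁻¹))
      = (1 - u^3) * Bfun u := by
    field_simp
  rw [hlhs, inv_pow, ← one_div, le_div_iff₀ (by positivity), mul_assoc]
  have hBrw : Bfun u = (1-u+u^2) / ((1-u)^2 * (1 - u^4/((1-u)*(1-u^2)))) := by
    unfold Bfun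
    rw [div_div]
  have hB2 : Bfun u * (1-u)^2 = (1-u+u^2)/(1 - u^4/((1-u)*(1-u^2))) := by
    rw [hBrw, div_mul_eq_mul_div,
      mul_comm ((1-u)^2) (1 - u^4/((1-u)*(1-u^2)))]
    exact mul_div_mul_right _ _ (by positivity)
  rw [hB2, mul_div_assoc', div_le_one hY]
  have hstep : u^4/((1-u)*(1-u^2)) ≤ u - u^2 + u^3 - u^4 + u^5 := by
    rw [div_le_iff₀ (by positivity)]
    have ha : u^3 ≤ 1/8 := by nlinarith
    have hb : (1:ℝ)/4 ≤ (1-u)^2 := by nlinarith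
    have hX : 1 - u^2 + 2*u^3 - u^4 ≤ 5/4 := by nlinarith
    have hXnn : (0:ℝ) ≤ 1 - u^2 + 2*u^3 - u^4 := by nlinarith
    have hprod : u^3 * (1 - u^2 + 2*u^3 - u^4) ≤ (1/8) * (5/4) :=
      mul_le_mul ha hX hXnn (by norm_num)
    nlinarith [hprod, hb, hu0.le]
  nlinarith [hstep]

end Final
theorem stmt17 (q : ℝ) (hq : 2 ≤ q) (n r : ℕ) (hr : 1 ≤ r) (hrn : r ≤ n - 1) (hn : 1 ≤ n) :
    Ptail n q r ≤
      (1 - 1/q)⁻¹^2 *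
        (1 / q^(2*n - 2*r + 2) + (1 / (1 - 1/q^(2*n + 1))) * (1 / q^(n + 1))) := by
  obtain ⟨hu0, hu2⟩ := u_facts hq
  have h1 : 0 < 1 - 1/q := one_sub_inv_q_pos hq
  have h1sq : 0 < 1 - (1/q)^2 := by nlinarith
  have hq0 : (0:ℝ) < q := by linarith
  have hRHS2 : 0 ≤ (1 / (1 - 1/q^(2*n + 1))) * (1 / q^(n + 1)) := by
    have := qPoch_factor_pos hq (show 1 ≤ 2*n+1 by omega)
    positivity
  rcases Nat.lt_or_ge r 2 with hr1 | hr2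
  · -- r = 1 : the tail is empty
    have hre : r = 1 := by omega
    have hempty : Finset.univ.filter (fun l : n.Partition => ∀ p ∈ l.parts, p < r)
        = (∅ : Finset (n.Partition)) := by
      rw [Finset.filter_eq_empty_iff]
      intro l _
      push_neg
      have hne : l.parts ≠ 0 := by
        intro h0
        have := l.parts_sum
        rw [h0] at this
        simp at this
        omega
      obtain ⟨p, hp⟩ := Multiset.exists_mem_of_ne_zero hne
      exact ⟨p, hp, by have := l.parts_pos hp; omega⟩
    have hPt0 : Ptail n q r = 0 := by
      unfold Ptail
      rw [hempty, Finset.sum_empty]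
    rw [hPt0]
    have hpow : (0:ℝ) ≤ 1 / q^(2*n - 2*r + 2) := by positivity
    have hsq : (0:ℝ) ≤ (1 - 1/q)⁻¹^2 := by positivity
    nlinarith
  -- now r ≥ 2, hence n ≥ 3
  -- rewrite Ptail
  have hfil : Finset.univ.filter (fun l : n.Partition => ∀ p ∈ l.parts, p < r)
      = Finset.univ.filter (fun l : n.Partition => ∀ p ∈ l.parts, p ≤ r - 1) := by
    apply Finset.filter_congr
    intro l _
    constructor
    · intro h p hp; have := h p hp; omega
    · intro h p hp; have := h p hp; omega
  have hPt : Ptail n q r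
      = qPoch q n * ∑ l ∈ Finset.univ.filter
          (fun l : n.Partition => ∀ p ∈ l.parts, p ≤ r - 1), Vq q l := by
    unfold Ptail
    rw [hfil, Finset.mul_sum]
    apply Finset.sum_congr rfl
    intro l _
    unfold Pmeas Vq
    rw [mul_comm (q^n) (qPoch q n), mul_div_assoc]
  -- main bound
  have hmain := main_bound hq hn (r-1)
  have hminrw : min (r-1) n = r - 1 := Nat.min_eq_left (by omega)
  rw [hminrw] at hmain
  -- bound on the geometric sum
  have hsum : ∑ a ∈ Finset.Icc 1 (r-1), ((1/q)^(2*(n-a)) * Tq q (n-a))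
      ≤ (Bfun (1/q) * (1 - (1/q)^2)⁻¹) * (1/q)^(2*(n-r+1)) := by
    have hBpos := (Bfun_facts hu0 hu2).2.1
    calc ∑ a ∈ Finset.Icc 1 (r-1), ((1/q)^(2*(n-a)) * Tq q (n-a))
        ≤ ∑ a ∈ Finset.Icc 1 (r-1),
            (Bfun (1/q) * (1/q)^(2*(n-r+1))) * ((1/q)^2)^((r-1)-a) := by
          apply Finset.sum_le_sum
          intro a hha
          have haa : 1 ≤ a ∧ a ≤ r-1 := Finset.mem_Icc.mp hha
          have hexp : 2*(n-a) = 2*(n-r+1) + 2*((r-1)-a) := by omega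
          calc (1/q)^(2*(n-a)) * Tq q (n-a)
              ≤ (1/q)^(2*(n-a)) * Bfun (1/q) := by
                apply mul_le_mul_of_nonneg_left (Tq_le_B hq (n-a)) (by positivity)
            _ = (Bfun (1/q) * (1/q)^(2*(n-r+1))) * ((1/q)^2)^((r-1)-a) := by
                rw [hexp, pow_add, ← pow_mul]
                ring
      _ = (Bfun (1/q) * (1/q)^(2*(n-r+1)))
            * ∑ a ∈ Finset.Icc 1 (r-1), ((1/q)^2)^((r-1)-a) := by
          rw [Finset.mul_sum]
      _ ≤ (Bfun (1/q) * (1/q)^(2*(n-r+1))) * (1 - (1/q)^2)⁻¹ := by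
          apply mul_le_mul_of_nonneg_left
            (geom_aux (by positivity) (by nlinarith) (r-1))
            (by positivity)
      _ = (Bfun (1/q) * (1 - (1/q)^2)⁻¹) * (1/q)^(2*(n-r+1)) := by ring
  -- n ≥ 3
  have hn3 : 3 ≤ n := by omega
  have hpoch3 : qPoch q n ≤ qPoch q 3 := qPoch_anti hq hn3
  have hpochnn : 0 ≤ qPoch q n := (qPoch_pos hq n).le
  -- assemble
  have hco := coeff_le hu0 hu2
  have hc2 : (1:ℝ) - 1/q^2 = 1 - (1/q)^2 := by rw [div_pow, one_pow]
  have hc3 : (1:ℝ) - 1/q^3 = 1 - (1/q)^3 := by rw [div_pow, one_pow]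
  have hq3 : qPoch q 3 = (1 - 1/q) * (1 - (1/q)^2) * (1 - (1/q)^3) := by
    rw [qPoch_three, hc2, hc3]
  have hchain : Ptail n q r ≤ ((1 - 1/q)⁻¹^2) * (1/q)^(2*(n-r+1)) := by
    calc Ptail n q r
        = qPoch q n * ∑ l ∈ Finset.univ.filter
            (fun l : n.Partition => ∀ p ∈ l.parts, p ≤ r - 1), Vq q l := hPt
      _ ≤ qPoch q n * ((1 - 1/q)⁻¹
            * ∑ a ∈ Finset.Icc 1 (r-1), ((1/q)^(2*(n-a)) * Tq q (n-a))) := by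
          apply mul_le_mul_of_nonneg_left hmain hpochnn
      _ ≤ qPoch q n * ((1 - 1/q)⁻¹
            * ((Bfun (1/q) * (1 - (1/q)^2)⁻¹) * (1/q)^(2*(n-r+1)))) := by
          apply mul_le_mul_of_nonneg_left _ hpochnn
          apply mul_le_mul_of_nonneg_left hsum (by positivity)
      _ ≤ qPoch q 3 * ((1 - 1/q)⁻¹
            * ((Bfun (1/q) * (1 - (1/q)^2)⁻¹) * (1/q)^(2*(n-r+1)))) := by
          apply mul_le_mul_of_nonneg_right hpoch3
          have hBpos := (Bfun_facts hu0 hu2).2.1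
          positivity
      _ = (((1 - 1/q) * (1 - (1/q)^2) * (1 - (1/q)^3))
            * ((1 - 1/q)⁻¹ * (Bfun (1/q) * (1 - (1/q)^2)⁻¹))) * (1/q)^(2*(n-r+1)) := by
          rw [hq3]; ring
      _ ≤ ((1 - 1/q)⁻¹^2) * (1/q)^(2*(n-r+1)) := by
          apply mul_le_mul_of_nonneg_right hco (by positivity)
  have he : 2*(n-r+1) = 2*n - 2*r + 2 := by omega
  have hexp2 : (1/q)^(2*(n-r+1)) = 1 / q^(2*n - 2*r + 2) := by
    rw [he, div_pow, one_pow]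
  calc Ptail n q r ≤ ((1 - 1/q)⁻¹^2) * (1/q)^(2*(n-r+1)) := hchain
    _ = ((1 - 1/q)⁻¹^2) * (1 / q^(2*n - 2*r + 2)) := by rw [hexp2]
    _ ≤ (1 - 1/q)⁻¹^2 *
        (1 / q^(2*n - 2*r + 2) + (1 / (1 - 1/q^(2*n + 1))) * (1 / q^(n + 1))) := by
        apply mul_le_mul_of_nonneg_left _ (by positivity)
        linarith
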